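/- Let v ∈ ℝ³ be a nonzero lightlike vector (q(v) = 0). Then the annihilator Ann(v) = {A ∈ 𝔠𝔬(1,2) : A·v = 0} is a Lie subalgebra of 𝔠𝔬(1,2) of dimension exactly 2. Conversely, if a 2-dimensional Lie subalgebra of 𝔠𝔬(1,2) annihilates a common nonzero vector v ∈ ℝ³, then v is lightlike. -/

import Mathlib

open Matrix

attribute [local instance] LieRing.ofAssociativeRing

noncomputable section

/-- The Lorentzian quadratic form `q(x) = 2x₁x₃ + x₂²` on `ℝ³`. -/
def qF (x : Fin 3 → ℝ) : ℝ := 2 * x 0 * x 2 + (x 1) ^ 2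

/-- The matrix of `qF`. -/
def Jmat : Matrix (Fin 3) (Fin 3) ℝ := !![0, 0, 1; 0, 1, 0; 1, 0, 0]

/-- The conformal Lie algebra `𝔠𝔬(1,2)`: matrices `A` with `Aᵀ·J + J·A = α·J`. -/
def co12 : Set (Matrix (Fin 3) (Fin 3) ℝ) :=
  {A | ∃ α : ℝ, Aᵀ * Jmat + Jmat * A = α • Jmat}

lemma transpose_eta (A : Matrix (Fin 3) (Fin 3) ℝ) :
    Aᵀ = !![A 0 0, A 1 0, A 2 0; A 0 1, A 1 1, A 2 1; A 0 2, A 1 2, A 2 2] := by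
  rw [Matrix.eta_fin_three Aᵀ]; rfl

lemma key_eq (A : Matrix (Fin 3) (Fin 3) ℝ) (α : ℝ) :
    Aᵀ * Jmat + Jmat * A = α • Jmat ↔
      (A 2 0 = 0 ∧ A 1 0 + A 2 1 = 0 ∧ A 0 0 + A 2 2 = α ∧
       A 1 1 + A 1 1 = α ∧ A 0 1 + A 1 2 = 0 ∧ A 0 2 = 0) := by
  rw [transpose_eta A, Matrix.eta_fin_three A]
  simp only [Jmat, Matrix.mul_fin_three, Matrix.smul_cons, Matrix.smul_empty, smul_eq_mul]
  norm_num [Matrix.cons_val_two, Matrix.vecHead, Matrix.vecTail]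
  constructor
  · rintro ⟨⟨h1,h2,h3⟩,⟨_,h4,h5⟩,_,_,h6⟩
    exact ⟨h1, h2, h3, h4, h5, h6⟩
  · rintro ⟨h1,h2,h3,h4,h5,h6⟩
    exact ⟨⟨h1, h2, h3⟩, ⟨by linarith, h4, h5⟩, by linarith, by linarith, h6⟩

lemma mem_co12_iff (A : Matrix (Fin 3) (Fin 3) ℝ) :
    A ∈ co12 ↔ (A 0 2 = 0 ∧ A 2 0 = 0 ∧ A 0 1 + A 1 2 = 0 ∧ A 1 0 + A 2 1 = 0 ∧
      A 0 0 + A 2 2 = 2 * A 1 1) := by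
  constructor
  · rintro ⟨α, h⟩
    rw [key_eq] at h
    obtain ⟨h1,h2,h3,h4,h5,h6⟩ := h
    exact ⟨h6, h1, h5, h2, by linarith⟩
  · rintro ⟨h1,h2,h3,h4,h5⟩
    exact ⟨2 * A 1 1, (key_eq A _).2 ⟨h2, h4, by linarith, by linarith, h3, h1⟩⟩

lemma mulVec_eq_zero_iff (A : Matrix (Fin 3) (Fin 3) ℝ) (u : Fin 3 → ℝ) :
    A.mulVec u = 0 ↔
      (A 0 0 * u 0 + A 0 1 * u 1 + A 0 2 * u 2 = 0 ∧
       A 1 0 * u 0 + A 1 1 * u 1 + A 1 2 * u 2 = 0 ∧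
       A 2 0 * u 0 + A 2 1 * u 1 + A 2 2 * u 2 = 0) := by
  constructor
  · intro h
    refine ⟨?_, ?_, ?_⟩ <;>
    · have := congrFun h
      have h0 := this 0; have h1 := this 1; have h2 := this 2
      simp [Matrix.mulVec, dotProduct, Fin.sum_univ_three] at h0 h1 h2
      assumption
  · rintro ⟨h0, h1, h2⟩
    funext i
    fin_cases i <;> simp [Matrix.mulVec, dotProduct, Fin.sum_univ_three] <;> assumption

/-- co12 is closed under commutator. -/
lemma co12_comm {A B : Matrix (Fin 3) (Fin 3) ℝ} (hA : A ∈ co12) (hB : B ∈ co12) :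
    A * B - B * A ∈ co12 := by
  rw [mem_co12_iff] at hA hB ⊢
  obtain ⟨a1, a2, a3, a4, a5⟩ := hA
  obtain ⟨b1, b2, b3, b4, b5⟩ := hB
  have a3' : A 0 1 = -A 1 2 := by linarith
  have a4' : A 1 0 = -A 2 1 := by linarith
  have a5' : A 0 0 = 2 * A 1 1 - A 2 2 := by linarith
  have b3' : B 0 1 = -B 1 2 := by linarith
  have b4' : B 1 0 = -B 2 1 := by linarith
  have b5' : B 0 0 = 2 * B 1 1 - B 2 2 := by linarith
  refine ⟨?_, ?_, ?_, ?_, ?_⟩ <;>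
    simp only [Matrix.sub_apply, Matrix.mul_apply, Fin.sum_univ_three] <;>
    simp only [a1, a2, a3', a4', a5', b1, b2, b3', b4', b5'] <;> ring

/-- The annihilator of `u` inside co12, as a submodule. -/
def annW (u : Fin 3 → ℝ) : Submodule ℝ (Matrix (Fin 3) (Fin 3) ℝ) where
  carrier := {A ∈ co12 | A.mulVec u = 0}
  add_mem' := by
    rintro A B ⟨⟨α, hα⟩, hA⟩ ⟨⟨β, hβ⟩, hB⟩
    refine ⟨⟨α + β, ?_⟩, ?_⟩
    · rw [Matrix.transpose_add, add_mul, mul_add, add_smul, ← hα, ← hβ]; abel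
    · rw [Matrix.add_mulVec, hA, hB, add_zero]
  zero_mem' := by
    refine ⟨⟨0, by simp⟩, by simp⟩
  smul_mem' := by
    rintro c A ⟨⟨α, hα⟩, hA⟩
    refine ⟨⟨c * α, ?_⟩, ?_⟩
    · rw [Matrix.transpose_smul, smul_mul_assoc, mul_smul_comm, ← smul_add, hα, smul_smul]
    · rw [Matrix.smul_mulVec, hA, smul_zero]

/-- The annihilator as a Lie subalgebra. -/
def annL (u : Fin 3 → ℝ) : LieSubalgebra ℝ (Matrix (Fin 3) (Fin 3) ℝ) :=
  { annW u with
    lie_mem' := by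
      rintro A B ⟨hA, hA'⟩ ⟨hB, hB'⟩
      refine ⟨co12_comm hA hB, ?_⟩
      show (A * B - B * A).mulVec u = 0
      rw [Matrix.sub_mulVec, ← Matrix.mulVec_mulVec, ← Matrix.mulVec_mulVec, hA', hB',
        Matrix.mulVec_zero, Matrix.mulVec_zero, sub_zero] }

def Bmat (u : Fin 3 → ℝ) : Matrix (Fin 3) (Fin 3) ℝ :=
  !![u 1, -u 0, 0; -u 2, 0, u 0; 0, u 2, -u 1]

lemma Bmat_mem (u : Fin 3 → ℝ) : Bmat u ∈ annW u := by
  constructor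
  · rw [mem_co12_iff]
    norm_num [Bmat, Matrix.cons_val_two, Matrix.vecHead, Matrix.vecTail]
  · rw [mulVec_eq_zero_iff]
    refine ⟨?_, ?_, ?_⟩ <;> · norm_num [Bmat, Matrix.cons_val_two, Matrix.vecHead, Matrix.vecTail]; ring

lemma Bmat_ne_zero {u : Fin 3 → ℝ} (hu : u ≠ 0) : Bmat u ≠ 0 := by
  intro h
  apply hu
  funext i
  have h0 := congrFun (congrFun h 0) 0
  have h1 := congrFun (congrFun h 0) 1
  have h2 := congrFun (congrFun h 1) 0
  norm_num [Bmat] at h0 h1 h2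
  fin_cases i <;> simp [h0, h1, h2]

/-- If `q u ≠ 0` then the annihilator is contained in the span of `Bmat u`. -/
lemma annW_le_span {u : Fin 3 → ℝ} (hq : qF u ≠ 0) :
    annW u ≤ Submodule.span ℝ {Bmat u} := by
  rintro A ⟨hA, hAv⟩
  rw [mem_co12_iff] at hA
  rw [mulVec_eq_zero_iff] at hAv
  obtain ⟨a1, a2, a3, a4, a5⟩ := hA
  obtain ⟨m0, m1, m2⟩ := hAv
  have hA11 : A 1 1 * (2 * u 0 * u 2 + u 1 ^ 2) = 0 := by
    linear_combination u 2 * m0 + u 1 * m1 + u 0 * m2 - u 0 * u 2 * a5 - u 1 * u 2 * a3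
      - u 0 * u 1 * a4 - u 0 ^ 2 * a2 - u 2 ^ 2 * a1
  rw [qF] at hq
  have h11 : A 1 1 = 0 := by
    rcases mul_eq_zero.1 hA11 with h | h
    · exact h
    · exact absurd h hq
  rw [Submodule.mem_span_singleton]
  by_cases ha : u 0 ≠ 0
  · refine ⟨A 1 2 / u 0, ?_⟩
    ext i j
    fin_cases i <;> fin_cases j <;> simp [Bmat, Matrix.smul_apply]
    · field_simp
      linear_combination -m0 + u 1 * a3 + u 2 * a1
    · field_simp
      linear_combination -a3
    · exact a1.symm
    · field_simp
      linear_combination -m1 + u 1 * h11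
    · exact h11.symm
    · field_simp
    · exact a2.symm
    · field_simp
      linear_combination m1 - u 1 * h11 - u 0 * a4
    · field_simp
      linear_combination -u 0 * a5 - 2 * u 0 * h11 + m0 - u 1 * a3 - u 2 * a1
  · push_neg at ha
    have hb : u 1 ≠ 0 := fun hb => hq (by rw [ha, hb]; ring)
    have hA01 : A 0 1 = 0 := by
      have h5 : A 0 1 * u 1 = 0 := by linear_combination m0 - A 0 0 * ha - u 2 * a1
      exact (mul_eq_zero.1 h5).resolve_right hb
    have hA12 : A 1 2 = 0 := by linarith
    refine ⟨A 0 0 / u 1, ?_⟩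
    ext i j
    fin_cases i <;> fin_cases j <;> simp [Bmat, Matrix.smul_apply]
    · field_simp
    · rw [ha]; simp [hA01]
    · exact a1.symm
    · field_simp
      linear_combination m2 - u 0 * a2 - u 1 * a4 - u 2 * a5 - 2 * u 2 * h11
    · exact h11.symm
    · rw [ha]; simp [hA12]
    · exact a2.symm
    · field_simp
      linear_combination -m2 + u 0 * a2 + u 2 * a5 + 2 * u 2 * h11
    · field_simp
      linear_combination -a5 - 2 * h11

def Cmat (u : Fin 3 → ℝ) : Matrix (Fin 3) (Fin 3) ℝ :=
  !![0, 0, 0; -u 1, u 0, 0; 0, u 1, 2 * u 0]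

def Dmat (u : Fin 3 → ℝ) : Matrix (Fin 3) (Fin 3) ℝ :=
  !![2 * u 2, u 1, 0; 0, u 2, -u 1; 0, 0, 0]

lemma Cmat_mem {u : Fin 3 → ℝ} (hlight : qF u = 0) : Cmat u ∈ annW u := by
  rw [qF] at hlight
  constructor
  · rw [mem_co12_iff]
    norm_num [Cmat, Matrix.cons_val_two, Matrix.vecHead, Matrix.vecTail]
  · rw [mulVec_eq_zero_iff]
    refine ⟨?_, ?_, ?_⟩ <;> norm_num [Cmat, Matrix.cons_val_two, Matrix.vecHead, Matrix.vecTail] <;>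
      linarith [hlight]

lemma Dmat_mem {u : Fin 3 → ℝ} (hlight : qF u = 0) : Dmat u ∈ annW u := by
  rw [qF] at hlight
  constructor
  · rw [mem_co12_iff]
    norm_num [Dmat, Matrix.cons_val_two, Matrix.vecHead, Matrix.vecTail]
  · rw [mulVec_eq_zero_iff]
    refine ⟨?_, ?_, ?_⟩ <;> norm_num [Dmat, Matrix.cons_val_two, Matrix.vecHead, Matrix.vecTail] <;>
      linarith [hlight]

lemma range_pair {M : Type*} (X Y : M) : Set.range ![X, Y] = {X, Y} := by
  simp [Matrix.range_cons, Matrix.range_empty, Set.pair_comm]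

lemma span_eq_a {u : Fin 3 → ℝ} (hlight : qF u = 0) (ha : u 0 ≠ 0) :
    annW u = Submodule.span ℝ (Set.range ![Bmat u, Cmat u]) := by
  rw [range_pair]
  apply le_antisymm
  · rintro A ⟨hA, hAv⟩
    rw [mem_co12_iff] at hA
    rw [mulVec_eq_zero_iff] at hAv
    obtain ⟨a1, a2, a3, a4, a5⟩ := hA
    obtain ⟨m0, m1, m2⟩ := hAv
    rw [Submodule.mem_span_pair]
    refine ⟨A 1 2 / u 0, A 1 1 / u 0, ?_⟩
    ext i j
    fin_cases i <;> fin_cases j <;> simp [Bmat, Cmat, Matrix.smul_apply] <;> (try field_simp)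
    · linear_combination -m0 + u 1 * a3 + u 2 * a1
    · linear_combination -a3
    · exact a1.symm
    · linear_combination -m1
    · exact a2.symm
    · linear_combination m1 - u 0 * a4
    · linear_combination m0 - u 1 * a3 - u 2 * a1 - u 0 * a5
  · rw [Submodule.span_le]
    rintro x hx
    rcases hx with h | h
    · rw [h]; exact Bmat_mem u
    · rw [Set.mem_singleton_iff] at h
      rw [h]; exact Cmat_mem hlight

lemma span_eq_c {u : Fin 3 → ℝ} (hlight : qF u = 0) (ha : u 0 = 0) (hc : u 2 ≠ 0) :
    annW u = Submodule.span ℝ (Set.range ![Bmat u, Dmat u]) := by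
  have hb : u 1 = 0 := by
    rw [qF, ha] at hlight
    have : u 1 ^ 2 = 0 := by linarith
    exact pow_eq_zero_iff (n := 2) (by norm_num) |>.1 this
  rw [range_pair]
  apply le_antisymm
  · rintro A ⟨hA, hAv⟩
    rw [mem_co12_iff] at hA
    rw [mulVec_eq_zero_iff] at hAv
    obtain ⟨a1, a2, a3, a4, a5⟩ := hA
    rw [ha, hb] at hAv
    obtain ⟨m0, m1, m2⟩ := hAv
    have hA12 : A 1 2 = 0 := by
      have : A 1 2 * u 2 = 0 := by linear_combination m1
      exact (mul_eq_zero.1 this).resolve_right hc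
    have hA01 : A 0 1 = 0 := by linarith
    have hA22 : A 2 2 = 0 := by
      have : A 2 2 * u 2 = 0 := by linear_combination m2
      exact (mul_eq_zero.1 this).resolve_right hc
    have hA00 : A 0 0 = 2 * A 1 1 := by linarith
    have hA21 : A 2 1 = -A 1 0 := by linarith
    rw [Submodule.mem_span_pair]
    refine ⟨-A 1 0 / u 2, A 1 1 / u 2, ?_⟩
    ext i j
    fin_cases i <;> fin_cases j <;>
      simp [Bmat, Dmat, Matrix.smul_apply, ha, hb, hA12, hA01, hA22, hA00, hA21, a1, a2,
        Matrix.vecHead, Matrix.vecTail] <;>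
      (try field_simp) <;> (try ring)
  · rw [Submodule.span_le]
    rintro x hx
    rcases hx with h | h
    · rw [h]; exact Bmat_mem u
    · rw [Set.mem_singleton_iff] at h
      rw [h]; exact Dmat_mem hlight

lemma indep_a {u : Fin 3 → ℝ} (ha : u 0 ≠ 0) : LinearIndependent ℝ ![Bmat u, Cmat u] := by
  rw [LinearIndependent.pair_iff]
  intro s t hst
  have h12 := congrFun (congrFun hst 1) 2
  have h11 := congrFun (congrFun hst 1) 1
  norm_num [Bmat, Cmat, Matrix.cons_val_two, Matrix.vecHead, Matrix.vecTail] at h12 h11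
  exact ⟨h12.resolve_right ha, h11.resolve_right ha⟩

lemma indep_c {u : Fin 3 → ℝ} (hc : u 2 ≠ 0) : LinearIndependent ℝ ![Bmat u, Dmat u] := by
  rw [LinearIndependent.pair_iff]
  intro s t hst
  have h10 := congrFun (congrFun hst 1) 0
  have h11 := congrFun (congrFun hst 1) 1
  norm_num [Bmat, Dmat] at h10 h11
  exact ⟨h10.resolve_right hc, h11.resolve_right hc⟩


theorem stmt9 (v : Fin 3 → ℝ) (hv : v ≠ 0) (hlight : qF v = 0) :
    -- the annihilator of `v` in `𝔠𝔬(1,2)` is a Lie subalgebra of dimension 2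
    (∃ L : LieSubalgebra ℝ (Matrix (Fin 3) (Fin 3) ℝ),
      (L : Set (Matrix (Fin 3) (Fin 3) ℝ)) = {A ∈ co12 | A.mulVec v = 0} ∧
      Module.finrank ℝ L = 2) ∧
    -- conversely, a common nonzero annihilated vector of a 2-dimensional
    -- Lie subalgebra of `𝔠𝔬(1,2)` is lightlike
    (∀ L : LieSubalgebra ℝ (Matrix (Fin 3) (Fin 3) ℝ),
      (L : Set (Matrix (Fin 3) (Fin 3) ℝ)) ⊆ co12 →
      Module.finrank ℝ L = 2 →
      ∀ w : Fin 3 → ℝ, w ≠ 0 → (∀ A ∈ L, A.mulVec w = 0) → qF w = 0) := by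
  constructor
  · refine ⟨annL v, rfl, ?_⟩
    have heq : Module.finrank ℝ (annL v) = Module.finrank ℝ (annW v) := rfl
    rw [heq]
    by_cases ha : v 0 ≠ 0
    · rw [span_eq_a hlight ha, finrank_span_eq_card (indep_a ha)]
      simp
    · push_neg at ha
      have hb : v 1 = 0 := by
        rw [qF, ha] at hlight
        have : v 1 ^ 2 = 0 := by linarith
        exact pow_eq_zero_iff (n := 2) (by norm_num) |>.1 this
      have hc : v 2 ≠ 0 := by
        intro hc
        apply hv
        funext i
        fin_cases i <;> simp [ha, hb, hc]
      rw [span_eq_c hlight ha hc, finrank_span_eq_card (indep_c hc)]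
      simp
  · intro L hsub hrank w hw hann
    by_contra hq
    have hle : L.toSubmodule ≤ Submodule.span ℝ {Bmat w} := by
      intro x hx
      exact annW_le_span hq ⟨hsub hx, hann x hx⟩
    have h1 : Module.finrank ℝ L.toSubmodule ≤ 1 :=
      (Submodule.finrank_mono hle).trans
        (le_of_eq (finrank_span_singleton (Bmat_ne_zero hw)))
    have h2 : Module.finrank ℝ L = Module.finrank ℝ L.toSubmodule := rfl
    omega
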